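/- Let CT be a caterpillar of length k ≥ 1, with no pair of adjacent trunks, in which every stem has at least three pendent neighbours. Then β_b(CT) = λ(CT) + τ(CT), where λ(CT) is the number of leaves and τ(CT) the number of trunks. -/

import Mathlib

open SimpleGraph Finset
open scoped Classical

variable {V : Type*}

noncomputable def ecc [Fintype V] (G : SimpleGraph V) (v : V) : ℕ :=
  Finset.univ.sup (fun u => G.dist v u)

noncomputable def gdiam [Fintype V] (G : SimpleGraph V) : ℕ :=
  Finset.univ.sup (fun v => ecc G v)

def IsIndepBroadcast [Fintype V] (G : SimpleGraph V) (f : V → ℕ) : Prop :=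
  (∀ v, f v ≤ ecc G v) ∧
  ∀ u v, u ≠ v → 0 < f u → 0 < f v → max (f u) (f v) < G.dist u v

def cost [Fintype V] (f : V → ℕ) : ℕ := ∑ v, f v

noncomputable def betaB [Fintype V] (G : SimpleGraph V) : ℕ :=
  sSup {c | ∃ f, IsIndepBroadcast G f ∧ cost f = c}

abbrev CatV (k : ℕ) (lam : Fin (k+1) → ℕ) := Fin (k+1) ⊕ (Σ i : Fin (k+1), Fin (lam i))

def caterpillar (k : ℕ) (lam : Fin (k+1) → ℕ) : SimpleGraph (CatV k lam) :=
  SimpleGraph.fromRel (fun u v => match u, v with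
    | Sum.inl i, Sum.inl j => (i : ℕ) + 1 = (j : ℕ)
    | Sum.inl i, Sum.inr p => i = p.1
    | _, _ => False)

def numLeaves (k : ℕ) (lam : Fin (k+1) → ℕ) : ℕ := ∑ i, lam i

def numTrunks (k : ℕ) (lam : Fin (k+1) → ℕ) : ℕ :=
  (Finset.univ.filter (fun i : Fin (k+1) => lam i = 0)).card

def noAdjTrunks (k : ℕ) (lam : Fin (k+1) → ℕ) : Prop :=
  ∀ i j : Fin (k+1), (i : ℕ) + 1 = (j : ℕ) → ¬(lam i = 0 ∧ lam j = 0)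

def fstar (k : ℕ) (lam : Fin (k+1) → ℕ) (f : CatV k lam → ℕ) (i : Fin (k+1)) : ℕ :=
  f (Sum.inl i) + ∑ j, f (Sum.inr ⟨i, j⟩)

set_option linter.unusedVariables false
set_option maxHeartbeats 1000000

section Core
variable (w : ℕ → ℕ)

lemma ico_disj {a b c d : ℕ} (h : b ≤ c) : Disjoint (Finset.Ico a b) (Finset.Ico c d) := by
  simp only [Finset.disjoint_left, Finset.mem_Ico]
  omega

lemma wsumA (hw13 : ∀ j, w j = 1 ∨ 3 ≤ w j) (hw2 : ∀ j, 4 ≤ w j + w (j+1)) :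
    ∀ L a, 3 ≤ w a → 2 * L ≤ ∑ j ∈ Finset.Ico a (a + L), w j := by
  intro L
  induction L using Nat.strong_induction_on with
  | _ L IH =>
    intro a ha
    match L with
    | 0 => simp
    | 1 =>
      rw [Finset.sum_eq_sum_Ico_succ_bot (by omega)]
      rw [show Finset.Ico (a+1) (a+1) = ∅ by simp]
      simpa using by omega
    | (L+2) =>
      rw [Finset.sum_eq_sum_Ico_succ_bot (by omega),
          Finset.sum_eq_sum_Ico_succ_bot (by omega : a + 1 < a + (L+2))]
      rw [show a+1+1 = a+2 by omega]
      rcases hw13 (a+1) with h1 | h3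
      · have h2 : 3 ≤ w (a+2) := by have h := hw2 (a+1); rw [show a+1+1 = a+2 by omega] at h; omega
        have hIH := IH L (by omega) (a+2) h2
        rw [show (a+2) + L = a + (L+2) by ring] at hIH
        omega
      · have hIH := IH (L+1) (by omega) (a+1) h3
        rw [show (a+1) + (L+1) = a + (L+2) by ring,
            Finset.sum_eq_sum_Ico_succ_bot (by omega : a + 1 < a + (L+2)),
            show a+1+1 = a+2 by omega] at hIH
        omega

lemma wsumB (hw13 : ∀ j, w j = 1 ∨ 3 ≤ w j) (hw2 : ∀ j, 4 ≤ w j + w (j+1)) :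
    ∀ L a, 1 ≤ L → 2 * L ≤ 1 + ∑ j ∈ Finset.Ico a (a + L), w j := by
  intro L a hL
  rcases hw13 a with h1 | h3
  · match L, hL with
    | 1, _ =>
      rw [Finset.sum_eq_sum_Ico_succ_bot (by omega)]
      rw [show Finset.Ico (a+1) (a+1) = ∅ by simp]
      simp; omega
    | (L+2), _ =>
      have h2 : 3 ≤ w (a+1) := by have := hw2 a; omega
      have hIH := wsumA w hw13 hw2 (L+1) (a+1) h2
      rw [show (a+1) + (L+1) = a + (L+2) by ring] at hIH
      rw [Finset.sum_eq_sum_Ico_succ_bot (by omega : a < a + (L+2))]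
      omega
  · have := wsumA w hw13 hw2 L a h3
    omega

lemma sumzone (n : ℕ) (F : ℕ → ℕ) (Hs : Finset ℕ) (Z : ℕ → Finset ℕ)
    (hz1 : ∀ i ∈ Hs, Z i ⊆ Finset.range n)
    (hz2 : ∀ i ∈ Hs, ∀ j ∈ Hs, i ≠ j → Disjoint (Z i) (Z j))
    (hz34 : ∀ i ∈ Hs, ∑ j ∈ Z i, F j ≤ ∑ j ∈ Z i, w j)
    (hz5 : ∀ j ∈ Finset.range n, j ∉ Hs.biUnion Z → F j ≤ w j) :
    ∑ j ∈ Finset.range n, F j ≤ ∑ j ∈ Finset.range n, w j := by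
  have hU : Hs.biUnion Z ⊆ Finset.range n := Finset.biUnion_subset.mpr hz1
  have hdisj : (Hs : Set ℕ).PairwiseDisjoint Z := fun i hi j hj hij => hz2 i hi j hj hij
  have h1 : ∑ j ∈ Hs.biUnion Z, F j ≤ ∑ j ∈ Hs.biUnion Z, w j := by
    rw [Finset.sum_biUnion hdisj, Finset.sum_biUnion hdisj]
    exact Finset.sum_le_sum hz34
  have h2 : ∑ j ∈ Finset.range n \ Hs.biUnion Z, F j ≤ ∑ j ∈ Finset.range n \ Hs.biUnion Z, w j :=
    Finset.sum_le_sum (fun j hj => by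
      rw [Finset.mem_sdiff] at hj; exact hz5 j hj.1 hj.2)
  calc ∑ j ∈ Finset.range n, F j
      = ∑ j ∈ Finset.range n \ Hs.biUnion Z, F j + ∑ j ∈ Hs.biUnion Z, F j :=
        (Finset.sum_sdiff hU).symm
    _ ≤ ∑ j ∈ Finset.range n \ Hs.biUnion Z, w j + ∑ j ∈ Hs.biUnion Z, w j :=
        Nat.add_le_add h2 h1
    _ = ∑ j ∈ Finset.range n, w j := Finset.sum_sdiff hU

lemma core (n : ℕ) (F g e : ℕ → ℕ)
    (hw1 : ∀ j, 1 ≤ w j) (hw13 : ∀ j, w j = 1 ∨ 3 ≤ w j) (hw2 : ∀ j, 4 ≤ w j + w (j+1))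
    (hh1 : ∀ i, w i < F i → F i = g i + e i ∧ e i ≤ 1 ∧ 2 ≤ F i)
    (hh2 : ∀ i, w i < F i → e i = 1 → 3 ≤ w i)
    (hh3 : ∀ i, w i < F i → g i ≤ max i (n - 1 - i) + 1)
    (hh4 : ∀ i j, w i < F i → j ≠ i → j < i + g i → i < j + g i → F j = 0)
    (hh5 : ∀ i j, w i < F i → w j < F j → i < j → max (F i) (F j) + 1 + i ≤ j + e i + e j) :
    ∑ j ∈ Finset.range n, F j ≤ ∑ j ∈ Finset.range n, w j := by
  classical
  set Hs := (Finset.range n).filter (fun i => w i < F i) with hHsdef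
  have hmem : ∀ i ∈ Hs, i < n ∧ w i < F i := by
    intro i hi
    simp only [hHsdef, Finset.mem_filter, Finset.mem_range] at hi
    exact hi
  have hmem' : ∀ i, i < n → w i < F i → i ∈ Hs := by
    intro i h1 h2
    simp only [hHsdef, Finset.mem_filter, Finset.mem_range]
    exact ⟨h1, h2⟩
  have hg1 : ∀ i ∈ Hs, 1 ≤ g i ∧ F i = g i + e i ∧ e i ≤ 1 ∧ 2 ≤ F i := by
    intro i hi
    obtain ⟨_, hF⟩ := hmem i hi
    obtain ⟨a, b, c⟩ := hh1 i hF
    exact ⟨by omega, a, b, c⟩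
  have sep' : ∀ i ∈ Hs, ∀ j ∈ Hs, i < j → i + g i ≤ j ∧ i + g j ≤ j := by
    intro i hi j hj hij
    obtain ⟨_, hiF⟩ := hmem i hi; obtain ⟨_, hjF⟩ := hmem j hj
    obtain ⟨_, e1, e2, e3⟩ := hg1 i hi; obtain ⟨_, f1, f2, f3⟩ := hg1 j hj
    have h5 := hh5 i j hiF hjF hij
    have hA : F i ≤ max (F i) (F j) := le_max_left _ _
    have hB : F j ≤ max (F i) (F j) := le_max_right _ _
    omega
  -- left zone: contains i, weight bound
  have memL : ∀ i ∈ Hs, i ∈ Finset.Ico (i + 1 - g i) (i + 1) := by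
    intro i hi
    obtain ⟨hgi, _, _, _⟩ := hg1 i hi
    simp only [Finset.mem_Ico]; omega
  have leftW : ∀ i ∈ Hs, g i ≤ i + 1 → F i ≤ ∑ j ∈ Finset.Ico (i + 1 - g i) (i + 1), w j := by
    intro i hi hfit
    obtain ⟨_, hiF⟩ := hmem i hi
    obtain ⟨hgi, e1, e2, e3⟩ := hg1 i hi
    rcases Nat.lt_or_ge (g i) 2 with h1 | h2
    · have hgg : g i = 1 := by omega
      have he : e i = 1 := by omega
      have hw3 := hh2 i hiF he
      rw [hgg, show i + 1 - 1 = i by omega,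
          Finset.sum_eq_sum_Ico_succ_bot (by omega : i < i + 1),
          show Finset.Ico (i+1) (i+1) = ∅ by simp]
      simp; omega
    · have hs := wsumB w hw13 hw2 (g i) (i + 1 - g i) (by omega)
      rw [show (i + 1 - g i) + g i = i + 1 by omega] at hs
      omega
  -- dead positions inside a left zone
  have deadL : ∀ i ∈ Hs, ∀ j ∈ Finset.Ico (i + 1 - g i) (i + 1), j ≠ i → F j = 0 := by
    intro i hi j hj hne
    obtain ⟨_, hiF⟩ := hmem i hi
    obtain ⟨hgi, _, _, _⟩ := hg1 i hi
    simp only [Finset.mem_Ico] at hj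
    exact hh4 i j hiF hne (by omega) (by omega)
  have sumL : ∀ i ∈ Hs, ∑ j ∈ Finset.Ico (i + 1 - g i) (i + 1), F j = F i := by
    intro i hi
    exact Finset.sum_eq_single_of_mem i (memL i hi) (fun b hb hbne => deadL i hi b hb hbne)
  have disjLL : ∀ i ∈ Hs, ∀ j ∈ Hs, i < j →
      Disjoint (Finset.Ico (i + 1 - g i) (i + 1)) (Finset.Ico (j + 1 - g j) (j + 1)) := by
    intro i hi j hj hij
    obtain ⟨hsep1, hsep2⟩ := sep' i hi j hj hij
    exact ico_disj (by omega)
  rcases Finset.eq_empty_or_nonempty Hs with hE | hNE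
  · refine Finset.sum_le_sum (fun j hj => ?_)
    by_contra hc
    push_neg at hc
    have := hmem' j (Finset.mem_range.mp hj) hc
    rw [hE] at this
    exact absurd this (Finset.notMem_empty j)
  · set i0 := Hs.min' hNE with hi0def
    have hi0m : i0 ∈ Hs := Finset.min'_mem _ _
    have hi0min : ∀ j ∈ Hs, i0 ≤ j := fun j hj => Finset.min'_le _ _ hj
    obtain ⟨hi0n, hi0F⟩ := hmem i0 hi0m
    obtain ⟨hgi0, he0a, he0b, he0c⟩ := hg1 i0 hi0m
    by_cases hfit0 : g i0 ≤ i0 + 1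
    · -- Case A: all left zones
      have hfitall : ∀ i ∈ Hs, g i ≤ i + 1 := by
        intro i hi
        rcases eq_or_ne i i0 with h | h
        · rw [h]; exact hfit0
        · have hlt : i0 < i := lt_of_le_of_ne (hi0min i hi) (Ne.symm h)
          have := (sep' i0 hi0m i hi hlt).2
          omega
      refine sumzone w n F Hs (fun i => Finset.Ico (i + 1 - g i) (i + 1)) ?_ ?_ ?_ ?_
      · intro i hi
        intro x hx
        simp only [Finset.mem_Ico] at hx
        simp only [Finset.mem_range]
        have := (hmem i hi).1
        omega
      · intro i hi j hj hij
        rcases lt_or_gt_of_ne hij with h | h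
        · exact disjLL i hi j hj h
        · exact (disjLL j hj i hi h).symm
      · intro i hi
        rw [sumL i hi]
        exact leftW i hi (hfitall i hi)
      · intro j hj hjU
        by_contra hc
        push_neg at hc
        have hjHs := hmem' j (Finset.mem_range.mp hj) hc
        exact hjU (Finset.mem_biUnion.mpr ⟨j, hjHs, memL j hjHs⟩)
    · -- Case B: i0 charges right
      push_neg at hfit0
      have hfitR : i0 + g i0 ≤ n := by
        have h3 := hh3 i0 hi0F
        rcases max_cases i0 (n - 1 - i0) with ⟨hm, _⟩ | ⟨hm, _⟩ <;> rw [hm] at h3 <;> omega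
      have hfitother : ∀ j ∈ Hs, j ≠ i0 → g j ≤ j + 1 ∧ i0 + g i0 ≤ j := by
        intro j hj hne
        have hlt : i0 < j := lt_of_le_of_ne (hi0min j hj) (Ne.symm hne)
        obtain ⟨hs1, hs2⟩ := sep' i0 hi0m j hj hlt
        exact ⟨by omega, hs1⟩
      have memR : i0 ∈ Finset.Ico i0 (i0 + g i0) := by
        simp only [Finset.mem_Ico]; omega
      have rightW : F i0 ≤ ∑ j ∈ Finset.Ico i0 (i0 + g i0), w j := by
        rcases Nat.eq_or_lt_of_le he0b with he | he
        · have hw3 := hh2 i0 hi0F he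
          have := wsumA w hw13 hw2 (g i0) i0 hw3
          omega
        · have he00 : e i0 = 0 := by omega
          have := wsumB w hw13 hw2 (g i0) i0 (by omega)
          omega
      have sumR : ∑ j ∈ Finset.Ico i0 (i0 + g i0), F j = F i0 := by
        refine Finset.sum_eq_single_of_mem i0 memR (fun b hb hbne => ?_)
        simp only [Finset.mem_Ico] at hb
        exact hh4 i0 b hi0F hbne (by omega) (by omega)
      by_cases hsing : (Hs.erase i0).Nonempty
      · set j1 := (Hs.erase i0).min' hsing with hj1def
        have hj1e : j1 ∈ Hs.erase i0 := Finset.min'_mem _ _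
        have hj1m : j1 ∈ Hs := (Finset.mem_erase.mp hj1e).2
        have hj1ne : j1 ≠ i0 := (Finset.mem_erase.mp hj1e).1
        have hj1lt : i0 < j1 := lt_of_le_of_ne (hi0min j1 hj1m) (Ne.symm hj1ne)
        have hj1min : ∀ j ∈ Hs, j ≠ i0 → j1 ≤ j := by
          intro j hj hne
          exact Finset.min'_le _ _ (Finset.mem_erase.mpr ⟨hne, hj⟩)
        obtain ⟨hj1n, hj1F⟩ := hmem j1 hj1m
        obtain ⟨hgj1, hf1a, hf1b, hf1c⟩ := hg1 j1 hj1m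
        obtain ⟨hsep01a, hsep01b⟩ := sep' i0 hi0m j1 hj1m hj1lt
        by_cases hconf : j1 + 1 < i0 + g i0 + g j1
        · -- Case B2: merge zone [i0, j1]
          refine sumzone w n F (Hs.erase j1)
            (fun i => if i = i0 then Finset.Ico i0 (j1 + 1) else Finset.Ico (i + 1 - g i) (i + 1))
            ?_ ?_ ?_ ?_
          · intro i hi x hx
            rcases eq_or_ne i i0 with h | h
            · rw [h, if_pos rfl] at hx
              simp only [Finset.mem_Ico] at hx
              simp only [Finset.mem_range]; omega
            · rw [if_neg h] at hx
              simp only [Finset.mem_Ico] at hx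
              simp only [Finset.mem_range]
              have := (hmem i (Finset.mem_erase.mp hi).2).1
              omega
          · intro i hi j hj hij
            have hiHs := (Finset.mem_erase.mp hi).2
            have hjHs := (Finset.mem_erase.mp hj).2
            have hine1 := (Finset.mem_erase.mp hi).1
            have hjne1 := (Finset.mem_erase.mp hj).1
            have key : ∀ a ∈ Hs.erase j1, a ≠ i0 →
                Disjoint (Finset.Ico i0 (j1 + 1)) (Finset.Ico (a + 1 - g a) (a + 1)) := by
              intro a ha hane
              have haHs := (Finset.mem_erase.mp ha).2
              have hane1 := (Finset.mem_erase.mp ha).1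
              have hj1a : j1 < a := lt_of_le_of_ne (hj1min a haHs hane) (Ne.symm hane1)
              obtain ⟨hs1, hs2⟩ := sep' j1 hj1m a haHs hj1a
              exact ico_disj (by omega)
            rcases eq_or_ne i i0 with h | h
            · subst h
              rw [if_pos rfl, if_neg (Ne.symm hij)]
              exact key j hj (Ne.symm hij)
            · rw [if_neg h]
              rcases eq_or_ne j i0 with h' | h'
              · subst h'
                rw [if_pos rfl]
                exact (key i hi h).symm
              · rw [if_neg h']
                rcases lt_or_gt_of_ne hij with hlt | hlt
                · exact disjLL i hiHs j hjHs hlt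
                · exact (disjLL j hjHs i hiHs hlt).symm
          · intro i hi
            rcases eq_or_ne i i0 with h | h
            · rw [h, if_pos rfl]
              -- merged zone bound
              have hsum : ∑ j ∈ Finset.Ico i0 (j1 + 1), F j = F i0 + F j1 + ∑ j ∈ Finset.Ico (i0+1) j1, F j := by
                rw [Finset.sum_eq_sum_Ico_succ_bot (by omega : i0 < j1 + 1),
                    Finset.sum_Ico_succ_top (by omega : i0 + 1 ≤ j1)]
                ring
              have hmid : ∑ j ∈ Finset.Ico (i0+1) j1, F j = 0 := by
                refine Finset.sum_eq_zero (fun j hj => ?_)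
                simp only [Finset.mem_Ico] at hj
                rcases Nat.lt_or_ge j (i0 + g i0) with hd | hd
                · exact hh4 i0 j hi0F (by omega) hd (by omega)
                · exact hh4 j1 j hj1F (by omega) (by omega) (by omega)
              have h5 := hh5 i0 j1 hi0F hj1F hj1lt
              have hA : F i0 ≤ max (F i0) (F j1) := le_max_left _ _
              have hB : F j1 ≤ max (F i0) (F j1) := le_max_right _ _
              rcases Nat.eq_or_lt_of_le he0b with he | he
              · have hw3 := hh2 i0 hi0F he
                have hws := wsumA w hw13 hw2 (j1 + 1 - i0) i0 hw3
                rw [show i0 + (j1 + 1 - i0) = j1 + 1 by omega] at hws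
                omega
              · have hws := wsumB w hw13 hw2 (j1 + 1 - i0) i0 (by omega)
                rw [show i0 + (j1 + 1 - i0) = j1 + 1 by omega] at hws
                omega
            · rw [if_neg h]
              have hiHs := (Finset.mem_erase.mp hi).2
              rw [sumL i hiHs]
              exact leftW i hiHs (hfitother i hiHs h).1
          · intro j hj hjU
            by_contra hc
            push_neg at hc
            have hjHs := hmem' j (Finset.mem_range.mp hj) hc
            apply hjU
            rcases eq_or_ne j j1 with h | h
            · refine Finset.mem_biUnion.mpr ⟨i0, Finset.mem_erase.mpr ⟨Ne.symm hj1ne, hi0m⟩, ?_⟩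
              rw [if_pos rfl]
              simp only [Finset.mem_Ico]; omega
            · refine Finset.mem_biUnion.mpr ⟨j, Finset.mem_erase.mpr ⟨h, hjHs⟩, ?_⟩
              rcases eq_or_ne j i0 with h' | h'
              · rw [if_pos h']
                simp only [Finset.mem_Ico]; omega
              · rw [if_neg h']
                exact memL j hjHs
        · -- Case B1: no conflict
          push_neg at hconf
          refine sumzone w n F Hs
            (fun i => if i = i0 then Finset.Ico i0 (i0 + g i0) else Finset.Ico (i + 1 - g i) (i + 1))
            ?_ ?_ ?_ ?_
          · intro i hi x hx
            rcases eq_or_ne i i0 with h | h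
            · rw [h, if_pos rfl] at hx
              simp only [Finset.mem_Ico] at hx
              simp only [Finset.mem_range]; omega
            · rw [if_neg h] at hx
              simp only [Finset.mem_Ico] at hx
              simp only [Finset.mem_range]
              have := (hmem i hi).1
              omega
          · intro i hi j hj hij
            have key : ∀ a ∈ Hs, a ≠ i0 →
                Disjoint (Finset.Ico i0 (i0 + g i0)) (Finset.Ico (a + 1 - g a) (a + 1)) := by
              intro a ha hane
              have hj1a : j1 ≤ a := hj1min a ha hane
              rcases eq_or_ne a j1 with h | h
              · subst h
                exact ico_disj (by omega)
              · have hj1a' : j1 < a := lt_of_le_of_ne hj1a (Ne.symm h)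
                obtain ⟨hs1, hs2⟩ := sep' j1 hj1m a ha hj1a'
                exact ico_disj (by omega)
            rcases eq_or_ne i i0 with h | h
            · subst h
              rw [if_pos rfl, if_neg (Ne.symm hij)]
              exact key j hj (Ne.symm hij)
            · rw [if_neg h]
              rcases eq_or_ne j i0 with h' | h'
              · subst h'
                rw [if_pos rfl]
                exact (key i hi h).symm
              · rw [if_neg h']
                rcases lt_or_gt_of_ne hij with hlt | hlt
                · exact disjLL i hi j hj hlt
                · exact (disjLL j hj i hi hlt).symm
          · intro i hi
            rcases eq_or_ne i i0 with h | h
            · subst h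
              rw [if_pos rfl, sumR]
              exact rightW
            · rw [if_neg h, sumL i hi]
              exact leftW i hi (hfitother i hi h).1
          · intro j hj hjU
            by_contra hc
            push_neg at hc
            have hjHs := hmem' j (Finset.mem_range.mp hj) hc
            apply hjU
            refine Finset.mem_biUnion.mpr ⟨j, hjHs, ?_⟩
            rcases eq_or_ne j i0 with h' | h'
            · rw [if_pos h']
              simp only [Finset.mem_Ico]; omega
            · rw [if_neg h']
              exact memL j hjHs
      · -- Hs = {i0}
        have hsingle : ∀ j ∈ Hs, j = i0 := by
          intro j hj
          by_contra hne
          exact hsing ⟨j, Finset.mem_erase.mpr ⟨hne, hj⟩⟩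
        refine sumzone w n F Hs (fun i => Finset.Ico i0 (i0 + g i0)) ?_ ?_ ?_ ?_
        · intro i hi x hx
          simp only [Finset.mem_Ico] at hx
          simp only [Finset.mem_range]; omega
        · intro i hi j hj hij
          exact absurd ((hsingle i hi).trans (hsingle j hj).symm) hij
        · intro i hi
          rw [sumR]
          exact rightW
        · intro j hj hjU
          by_contra hc
          push_neg at hc
          have hjHs := hmem' j (Finset.mem_range.mp hj) hc
          apply hjU
          refine Finset.mem_biUnion.mpr ⟨j, hjHs, ?_⟩
          rw [hsingle j hjHs]
          exact memR

end Core



namespace CatAux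
variable {k : ℕ} {lam : Fin (k+1) → ℕ}

def posn : CatV k lam → ℕ := fun x => match x with
  | Sum.inl i => (i : ℕ)
  | Sum.inr p => (p.1 : ℕ)

def lfn : CatV k lam → ℕ := fun x => match x with
  | Sum.inl _ => 0
  | Sum.inr _ => 1

lemma posn_le (x : CatV k lam) : posn x ≤ k := by
  cases x with
  | inl i => exact Nat.lt_succ_iff.mp i.isLt
  | inr p => exact Nat.lt_succ_iff.mp p.1.isLt

lemma lfn_le (x : CatV k lam) : lfn x ≤ 1 := by
  cases x with
  | inl i => exact Nat.zero_le 1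
  | inr p => exact le_refl 1

lemma ne_of_posn {x y : CatV k lam} (h : posn x ≠ posn y) : x ≠ y := by
  intro he; exact h (he ▸ rfl)

lemma cat_adj_spine {i j : Fin (k+1)} (h : (i : ℕ) + 1 = (j : ℕ)) :
    (caterpillar k lam).Adj (Sum.inl i) (Sum.inl j) := by
  rw [caterpillar, SimpleGraph.fromRel_adj]
  refine ⟨?_, Or.inl h⟩
  intro he
  have : (i : ℕ) = (j : ℕ) := by rw [Sum.inl.injEq] at he; exact congrArg _ he
  omega

lemma cat_adj_leaf (i : Fin (k+1)) (t : Fin (lam i)) :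
    (caterpillar k lam).Adj (Sum.inl i) (Sum.inr ⟨i, t⟩) := by
  rw [caterpillar, SimpleGraph.fromRel_adj]
  exact ⟨by simp, Or.inl rfl⟩

lemma cat_not_adj_leaf_leaf (p q : Σ i : Fin (k+1), Fin (lam i)) :
    ¬ (caterpillar k lam).Adj (Sum.inr p) (Sum.inr q) := by
  rw [caterpillar, SimpleGraph.fromRel_adj]
  rintro ⟨-, h | h⟩ <;> exact h

lemma cat_adj_inl_inl {i j : Fin (k+1)}
    (h : (caterpillar k lam).Adj (Sum.inl i) (Sum.inl j)) :
    (i : ℕ) + 1 = (j : ℕ) ∨ (j : ℕ) + 1 = (i : ℕ) := by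
  rw [caterpillar, SimpleGraph.fromRel_adj] at h
  exact h.2

lemma cat_adj_inl_inr {i : Fin (k+1)} {p : Σ i : Fin (k+1), Fin (lam i)}
    (h : (caterpillar k lam).Adj (Sum.inl i) (Sum.inr p)) : i = p.1 := by
  rw [caterpillar, SimpleGraph.fromRel_adj] at h
  rcases h.2 with h' | h'
  · exact h'
  · exact h'.elim

lemma spine_walk : ∀ (d : ℕ) (i j : Fin (k+1)), (i : ℕ) + d = (j : ℕ) →
    ∃ p : (caterpillar k lam).Walk (Sum.inl i) (Sum.inl j), p.length = d := by
  intro d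
  induction d with
  | zero =>
    intro i j h
    have : i = j := Fin.ext (by omega)
    subst this
    exact ⟨SimpleGraph.Walk.nil, rfl⟩
  | succ d IH =>
    intro i j h
    have hj : (j : ℕ) < k + 1 := j.isLt
    have hi1 : (i : ℕ) + 1 < k + 1 := by omega
    set i' : Fin (k+1) := ⟨(i : ℕ) + 1, hi1⟩ with hi'
    obtain ⟨p, hp⟩ := IH i' j (by simp [hi']; omega)
    exact ⟨SimpleGraph.Walk.cons (cat_adj_spine rfl) p, by simp [hp]⟩

lemma spine_walk2 (i j : Fin (k+1)) :
    ∃ p : (caterpillar k lam).Walk (Sum.inl i) (Sum.inl j),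
      p.length ≤ ((i : ℕ) - (j : ℕ)) + ((j : ℕ) - (i : ℕ)) := by
  rcases le_total (i : ℕ) (j : ℕ) with h | h
  · obtain ⟨p, hp⟩ := spine_walk ((j : ℕ) - (i : ℕ)) i j (by omega)
    exact ⟨p, by omega⟩
  · obtain ⟨p, hp⟩ := spine_walk ((i : ℕ) - (j : ℕ)) j i (by omega)
    refine ⟨p.reverse, ?_⟩
    rw [SimpleGraph.Walk.length_reverse]
    omega

lemma walk_ub (u v : CatV k lam) :
    ∃ p : (caterpillar k lam).Walk u v,
      p.length ≤ (posn u - posn v) + (posn v - posn u) + lfn u + lfn v := by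
  have core : ∀ (i j : Fin (k+1)), ∃ p : (caterpillar k lam).Walk (Sum.inl i) (Sum.inl j),
      p.length ≤ ((i : ℕ) - (j : ℕ)) + ((j : ℕ) - (i : ℕ)) := spine_walk2
  cases u with
  | inl i =>
    cases v with
    | inl j =>
      obtain ⟨p, hp⟩ := core i j
      exact ⟨p, by simpa [posn, lfn] using hp⟩
    | inr q =>
      obtain ⟨p, hp⟩ := core i q.1
      refine ⟨p.append (SimpleGraph.Walk.cons (cat_adj_leaf q.1 q.2) SimpleGraph.Walk.nil), ?_⟩
      rw [SimpleGraph.Walk.length_append]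
      simp only [posn, lfn, SimpleGraph.Walk.length_cons, SimpleGraph.Walk.length_nil]
      omega
  | inr q =>
    cases v with
    | inl j =>
      obtain ⟨p, hp⟩ := core q.1 j
      refine ⟨SimpleGraph.Walk.cons (cat_adj_leaf q.1 q.2).symm p, ?_⟩
      simp only [posn, lfn, SimpleGraph.Walk.length_cons]
      omega
    | inr r =>
      obtain ⟨p, hp⟩ := core q.1 r.1
      refine ⟨SimpleGraph.Walk.cons (cat_adj_leaf q.1 q.2).symm
        (p.append (SimpleGraph.Walk.cons (cat_adj_leaf r.1 r.2) SimpleGraph.Walk.nil)), ?_⟩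
      simp only [posn, lfn, SimpleGraph.Walk.length_cons, SimpleGraph.Walk.length_append,
        SimpleGraph.Walk.length_nil]
      omega

lemma dist_ub (u v : CatV k lam) :
    (caterpillar k lam).dist u v ≤ (posn u - posn v) + (posn v - posn u) + lfn u + lfn v := by
  obtain ⟨p, hp⟩ := walk_ub u v
  exact le_trans (SimpleGraph.dist_le p) hp

lemma reach (u v : CatV k lam) : (caterpillar k lam).Reachable u v := by
  obtain ⟨p, -⟩ := walk_ub u v
  exact p.reachable

end CatAux


namespace CatAux
variable {k : ℕ} {lam : Fin (k+1) → ℕ}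

lemma ecc_ub (v : CatV k lam) :
    ecc (caterpillar k lam) v ≤ max (posn v) (k - posn v) + lfn v + 1 := by
  refine Finset.sup_le (fun u _ => ?_)
  have h1 := dist_ub v u
  have h2 := posn_le u
  have h3 := posn_le v
  have h4 := lfn_le u
  have h5 := le_max_left (posn v) (k - posn v)
  have h6 := le_max_right (posn v) (k - posn v)
  omega

lemma ecc_pos (hk : 1 ≤ k) (v : CatV k lam) : 1 ≤ ecc (caterpillar k lam) v := by
  have hkk : (0 : ℕ) < k + 1 := by omega
  have hkk1 : (1 : ℕ) < k + 1 := by omega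
  set a : CatV k lam := Sum.inl ⟨0, hkk⟩ with ha
  set b : CatV k lam := Sum.inl ⟨1, hkk1⟩ with hb
  have hab : a ≠ b := by
    simp only [ha, hb, ne_eq, Sum.inl.injEq, Fin.mk.injEq]
    omega
  have key : ∀ u : CatV k lam, u ≠ v → 1 ≤ ecc (caterpillar k lam) v := by
    intro u hu
    have h1 : 0 < (caterpillar k lam).dist v u :=
      (reach v u).pos_dist_of_ne (Ne.symm hu)
    exact le_trans h1 (Finset.le_sup (Finset.mem_univ u))
  rcases eq_or_ne a v with h | h
  · exact key b (by rw [← h]; exact Ne.symm hab)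
  · exact key a h

lemma two_le_dist (hk : 1 ≤ k) {u v : CatV k lam}
    (hne : u ≠ v) (hnadj : ¬ (caterpillar k lam).Adj u v) :
    2 ≤ (caterpillar k lam).dist u v := by
  have h1 : 0 < (caterpillar k lam).dist u v := (reach u v).pos_dist_of_ne hne
  have h2 : (caterpillar k lam).dist u v ≠ 1 := by
    intro h
    exact hnadj (SimpleGraph.dist_eq_one_iff_adj.mp h)
  omega

/-- the canonical broadcast: 1 on every leaf and every trunk -/
def fzero (k : ℕ) (lam : Fin (k+1) → ℕ) : CatV k lam → ℕ := fun x => match x with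
  | Sum.inl i => if lam i = 0 then 1 else 0
  | Sum.inr _ => 1

lemma fzero_indep (hk : 1 ≤ k)
    (htr : ∀ i j : Fin (k+1), (i : ℕ) + 1 = (j : ℕ) → ¬(lam i = 0 ∧ lam j = 0)) :
    IsIndepBroadcast (caterpillar k lam) (fzero k lam) := by
  constructor
  · intro v
    have := ecc_pos hk (lam := lam) v
    cases v with
    | inl i =>
      by_cases h : lam i = 0 <;> simp [fzero, h] <;> omega
    | inr p => simpa [fzero] using this
  · intro u v hne hu hv
    have hu1 : fzero k lam u = 1 := by
      cases u with
      | inl i =>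
        by_cases h : lam i = 0 <;> simp [fzero, h] at hu ⊢
      | inr p => rfl
    have hv1 : fzero k lam v = 1 := by
      cases v with
      | inl i =>
        by_cases h : lam i = 0 <;> simp [fzero, h] at hv ⊢
      | inr p => rfl
    have hnadj : ¬ (caterpillar k lam).Adj u v := by
      intro hadj
      cases u with
      | inl i =>
        have hti : lam i = 0 := by
          by_contra h; simp [fzero, h] at hu
        cases v with
        | inl j =>
          have htj : lam j = 0 := by
            by_contra h; simp [fzero, h] at hv
          rcases cat_adj_inl_inl hadj with h | h
          · exact htr i j h ⟨hti, htj⟩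
          · exact htr j i h ⟨htj, hti⟩
        | inr p =>
          have heq := cat_adj_inl_inr hadj
          have hlt := p.2.isLt
          rw [heq] at hti
          omega
      | inr p =>
        cases v with
        | inl j =>
          have htj : lam j = 0 := by
            by_contra h; simp [fzero, h] at hv
          have heq := cat_adj_inl_inr hadj.symm
          have hlt := p.2.isLt
          rw [heq] at htj
          omega
        | inr q => exact cat_not_adj_leaf_leaf p q hadj
    have := two_le_dist hk hne hnadj
    rw [hu1, hv1]
    omega

end CatAux


namespace CatAux
variable {k : ℕ} {lam : Fin (k+1) → ℕ}

lemma cost_eq (f : CatV k lam → ℕ) : cost f = ∑ i : Fin (k+1), fstar k lam f i := by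
  rw [cost, Fintype.sum_sum_type, ← Finset.univ_sigma_univ, Finset.sum_sigma]
  rw [← Finset.sum_add_distrib]
  rfl

lemma wsum_eq : ∑ i : Fin (k+1), (if lam i = 0 then 1 else lam i)
    = numLeaves k lam + numTrunks k lam := by
  rw [numLeaves, numTrunks, Finset.card_filter, ← Finset.sum_add_distrib]
  refine Finset.sum_congr rfl (fun i _ => ?_)
  by_cases h : lam i = 0 <;> simp [h]

lemma cost_fzero : cost (fzero k lam) = numLeaves k lam + numTrunks k lam := by
  rw [cost_eq, ← wsum_eq]
  refine Finset.sum_congr rfl (fun i _ => ?_)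
  by_cases h : lam i = 0 <;> simp [fstar, fzero, h, Finset.card_univ]

lemma dist_leaf_spine (i : Fin (k+1)) (t : Fin (lam i)) :
    (caterpillar k lam).dist (Sum.inl i) (Sum.inr ⟨i, t⟩) ≤ 1 := by
  have := dist_ub (lam := lam) (Sum.inl i) (Sum.inr ⟨i, t⟩)
  simpa [posn, lfn] using this

lemma dist_leaf_leaf (i : Fin (k+1)) (t t' : Fin (lam i)) :
    (caterpillar k lam).dist (Sum.inr ⟨i, t⟩) (Sum.inr ⟨i, t'⟩) ≤ 2 := by
  have := dist_ub (lam := lam) (Sum.inr ⟨i, t⟩) (Sum.inr ⟨i, t'⟩)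
  simpa [posn, lfn] using this

lemma heavy_extract (hstem : ∀ i, lam i ≠ 0 → 3 ≤ lam i)
    (f : CatV k lam → ℕ) (hf : IsIndepBroadcast (caterpillar k lam) f) (i : Fin (k+1))
    (hheavy : (if lam i = 0 then 1 else lam i) < fstar k lam f i) :
    ∃ x : CatV k lam, posn x = (i : ℕ) ∧ 2 ≤ f x ∧ fstar k lam f i = f x ∧
      (lfn x = 1 → 3 ≤ (if lam i = 0 then 1 else lam i)) := by
  by_cases hA : 2 ≤ f (Sum.inl i)
  · have hlv : ∀ t, f (Sum.inr (⟨i, t⟩ : Σ i : Fin (k+1), Fin (lam i))) = 0 := by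
      intro t
      by_contra ht
      have hd := hf.2 (Sum.inl i) (Sum.inr ⟨i, t⟩) (by simp) (by omega) (by omega)
      have h1 := dist_leaf_spine i t
      have h2 := le_max_left (f (Sum.inl i)) (f (Sum.inr ⟨i, t⟩))
      omega
    refine ⟨Sum.inl i, rfl, hA, ?_, by intro h; simp [lfn] at h⟩
    simp [fstar, hlv]
  by_cases hB : ∃ t, 2 ≤ f (Sum.inr (⟨i, t⟩ : Σ i : Fin (k+1), Fin (lam i)))
  · obtain ⟨t, ht⟩ := hB
    have hsp : f (Sum.inl i) = 0 := by
      by_contra hsp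
      have hd := hf.2 (Sum.inr ⟨i, t⟩) (Sum.inl i) (by simp) (by omega) (by omega)
      have h1 := dist_leaf_spine i t
      have h2 := le_max_left (f (Sum.inr ⟨i, t⟩)) (f (Sum.inl i))
      rw [SimpleGraph.dist_comm] at hd
      omega
    have hlv : ∀ t', t' ≠ t → f (Sum.inr (⟨i, t'⟩ : Σ i : Fin (k+1), Fin (lam i))) = 0 := by
      intro t' ht'
      by_contra htv
      have hne : (Sum.inr (⟨i, t⟩ : Σ i : Fin (k+1), Fin (lam i)) : CatV k lam)
          ≠ Sum.inr ⟨i, t'⟩ := by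
        simp only [ne_eq, Sum.inr.injEq, Sigma.mk.inj_iff, heq_eq_eq, true_and]
        exact fun h => ht' h.symm
      have hd := hf.2 (Sum.inr ⟨i, t⟩) (Sum.inr ⟨i, t'⟩) hne (by omega) (by omega)
      have h1 := dist_leaf_leaf i t t'
      have h2 := le_max_left (f (Sum.inr ⟨i, t⟩)) (f (Sum.inr ⟨i, t'⟩))
      omega
    have hlam : lam i ≠ 0 := by
      intro h
      have := t.isLt
      omega
    refine ⟨Sum.inr ⟨i, t⟩, rfl, ht, ?_, ?_⟩
    · rw [fstar, hsp, Finset.sum_eq_single_of_mem t (Finset.mem_univ t)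
        (fun b _ hb => hlv b hb)]
      omega
    · intro _
      rw [if_neg hlam]
      exact hstem i hlam
  · exfalso
    push_neg at hA hB
    rcases Nat.lt_or_ge (f (Sum.inl i)) 1 with hC | hC
    · have hsp : f (Sum.inl i) = 0 := by omega
      have : fstar k lam f i ≤ lam i := by
        rw [fstar, hsp]
        have : ∑ j : Fin (lam i), f (Sum.inr (⟨i, j⟩ : Σ i : Fin (k+1), Fin (lam i)))
            ≤ ∑ _j : Fin (lam i), 1 :=
          Finset.sum_le_sum (fun j _ => by have := hB j; omega)
        simpa using this
      by_cases h : lam i = 0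
      · rw [if_pos h] at hheavy; omega
      · rw [if_neg h] at hheavy; omega
    · have hsp : f (Sum.inl i) = 1 := by omega
      have hlv : ∀ t, f (Sum.inr (⟨i, t⟩ : Σ i : Fin (k+1), Fin (lam i))) = 0 := by
        intro t
        by_contra ht
        have hd := hf.2 (Sum.inl i) (Sum.inr ⟨i, t⟩) (by simp) (by omega) (by omega)
        have h1 := dist_leaf_spine i t
        have h2 := le_max_left (f (Sum.inl i)) (f (Sum.inr ⟨i, t⟩))
        omega
      have : fstar k lam f i = 1 := by simp [fstar, hlv, hsp]
      by_cases h : lam i = 0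
      · rw [if_pos h] at hheavy; omega
      · rw [if_neg h] at hheavy
        have := hstem i h
        omega

end CatAux

namespace CatAux
variable {k : ℕ} {lam : Fin (k+1) → ℕ}

lemma upper (hstem : ∀ i, lam i ≠ 0 → 3 ≤ lam i)
    (htr : ∀ i j : Fin (k+1), (i : ℕ) + 1 = (j : ℕ) → ¬(lam i = 0 ∧ lam j = 0))
    (f : CatV k lam → ℕ) (hf : IsIndepBroadcast (caterpillar k lam) f) :
    cost f ≤ numLeaves k lam + numTrunks k lam := by
  classical
  let Fe : ℕ → ℕ := fun j => if h : j < k + 1 then fstar k lam f ⟨j, h⟩ else 0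
  let we : ℕ → ℕ := fun j => if h : j < k + 1 then (if lam ⟨j, h⟩ = 0 then 1 else lam ⟨j, h⟩) else 3
  have hFe : ∀ (j) (h : j < k + 1), Fe j = fstar k lam f ⟨j, h⟩ := fun j h => dif_pos h
  have hFe0 : ∀ j, ¬ j < k + 1 → Fe j = 0 := fun j h => dif_neg h
  have hwe : ∀ (j) (h : j < k + 1), we j = (if lam ⟨j, h⟩ = 0 then 1 else lam ⟨j, h⟩) :=
    fun j h => dif_pos h
  have hwe0 : ∀ j, ¬ j < k + 1 → we j = 3 := fun j h => dif_neg h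
  have hw13 : ∀ j, we j = 1 ∨ 3 ≤ we j := by
    intro j
    by_cases h : j < k + 1
    · rw [hwe j h]
      by_cases h2 : lam ⟨j, h⟩ = 0
      · rw [if_pos h2]; exact Or.inl rfl
      · rw [if_neg h2]; exact Or.inr (hstem _ h2)
    · rw [hwe0 j h]; omega
  have hw1 : ∀ j, 1 ≤ we j := fun j => by rcases hw13 j with h | h <;> omega
  have hw2 : ∀ j, 4 ≤ we j + we (j+1) := by
    intro j
    by_cases h : j + 1 < k + 1
    · have hj : j < k + 1 := by omega
      have hadj := htr ⟨j, hj⟩ ⟨j+1, h⟩ rfl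
      rw [hwe j hj, hwe (j+1) h]
      by_cases h2 : lam ⟨j, hj⟩ = 0
      · have h3 : lam ⟨j+1, h⟩ ≠ 0 := fun hc => hadj ⟨h2, hc⟩
        rw [if_pos h2, if_neg h3]
        have := hstem _ h3
        omega
      · rw [if_neg h2]
        have h5 := hstem _ h2
        by_cases h3 : lam ⟨j+1, h⟩ = 0
        · rw [if_pos h3]; omega
        · rw [if_neg h3]
          have := hstem _ h3
          omega
    · have := hw1 j
      rw [hwe0 (j+1) h]
      omega
  have hbig : ∀ j, we j < Fe j → ∃ x : CatV k lam,
      posn x = j ∧ 2 ≤ f x ∧ Fe j = f x ∧ (lfn x = 1 → 3 ≤ we j) := by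
    intro j hj
    by_cases h : j < k + 1
    · rw [hFe j h] at hj ⊢
      rw [hwe j h] at hj ⊢
      exact heavy_extract hstem f hf ⟨j, h⟩ hj
    · rw [hFe0 j h, hwe0 j h] at hj; omega
  let g : ℕ → ℕ := fun j =>
    if h : we j < Fe j then f ((hbig j h).choose) - lfn ((hbig j h).choose) else 0
  let e : ℕ → ℕ := fun j => if h : we j < Fe j then lfn ((hbig j h).choose) else 0
  have hge : ∀ (j) (h : we j < Fe j),
      g j = f ((hbig j h).choose) - lfn ((hbig j h).choose) ∧
      e j = lfn ((hbig j h).choose) := fun j h => ⟨dif_pos h, dif_pos h⟩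
  have hh1 : ∀ i, we i < Fe i → Fe i = g i + e i ∧ e i ≤ 1 ∧ 2 ≤ Fe i := by
    intro i h
    obtain ⟨hg, he⟩ := hge i h
    obtain ⟨h1, h2, h3, h4⟩ := (hbig i h).choose_spec
    have hle := lfn_le (hbig i h).choose
    refine ⟨by rw [hg, he]; omega, by rw [he]; omega, by omega⟩
  have hh2 : ∀ i, we i < Fe i → e i = 1 → 3 ≤ we i := by
    intro i h hei
    obtain ⟨hg, he⟩ := hge i h
    obtain ⟨h1, h2, h3, h4⟩ := (hbig i h).choose_spec
    exact h4 (by rw [← he]; exact hei)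
  have hh3 : ∀ i, we i < Fe i → g i ≤ max i (k + 1 - 1 - i) + 1 := by
    intro i h
    obtain ⟨hg, he⟩ := hge i h
    obtain ⟨h1, h2, h3, h4⟩ := (hbig i h).choose_spec
    have hecc := hf.1 (hbig i h).choose
    have hub := ecc_ub (hbig i h).choose
    have hle := lfn_le (hbig i h).choose
    rw [h1] at hub
    have hmm : max i (k + 1 - 1 - i) = max i (k - i) := by
      congr 1
    rw [hmm]
    omega
  have hh4 : ∀ i j, we i < Fe i → j ≠ i → j < i + g i → i < j + g i → Fe j = 0 := by
    intro i j hi hne hb1 hb2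
    obtain ⟨hg, he⟩ := hge i hi
    obtain ⟨hx1, hx2, hx3, hx4⟩ := (hbig i hi).choose_spec
    by_cases hjn : j < k + 1
    · rw [hFe j hjn]
      have hzero : ∀ y : CatV k lam, posn y = j → f y = 0 := by
        intro y hy
        by_contra hfy
        have hxy : (hbig i hi).choose ≠ y := ne_of_posn (by rw [hx1, hy]; exact Ne.symm hne)
        have hd := hf.2 _ y hxy (by omega) (by omega)
        have hub := dist_ub (hbig i hi).choose y
        have hl1 := lfn_le y
        have hl2 := lfn_le (hbig i hi).choose
        have hmax := le_max_left (f (hbig i hi).choose) (f y)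
        rw [hx1, hy] at hub
        omega
      rw [fstar, hzero (Sum.inl ⟨j, hjn⟩) rfl,
        Finset.sum_eq_zero (fun t _ => hzero (Sum.inr ⟨⟨j, hjn⟩, t⟩) rfl)]
      rfl
    · exact hFe0 j hjn
  have hh5 : ∀ i j, we i < Fe i → we j < Fe j → i < j →
      max (Fe i) (Fe j) + 1 + i ≤ j + e i + e j := by
    intro i j hi hj hij
    obtain ⟨hgi, hei⟩ := hge i hi
    obtain ⟨hx1, hx2, hx3, hx4⟩ := (hbig i hi).choose_spec
    obtain ⟨hgj, hej⟩ := hge j hj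
    obtain ⟨hy1, hy2, hy3, hy4⟩ := (hbig j hj).choose_spec
    have hxy : (hbig i hi).choose ≠ (hbig j hj).choose :=
      ne_of_posn (by rw [hx1, hy1]; omega)
    have hd := hf.2 _ _ hxy (by omega) (by omega)
    have hub := dist_ub (hbig i hi).choose (hbig j hj).choose
    rw [hx1, hy1] at hub
    rw [hx3, hy3]
    omega
  have hcore := core we (k+1) Fe g e hw1 hw13 hw2 hh1 hh2 hh3 hh4 hh5
  have hsum1 : ∑ j ∈ Finset.range (k+1), Fe j = cost f := by
    rw [cost_eq, ← Fin.sum_univ_eq_sum_range]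
    refine Finset.sum_congr rfl (fun i _ => ?_)
    rw [hFe (i : ℕ) i.isLt, Fin.eta]
  have hsum2 : ∑ j ∈ Finset.range (k+1), we j = numLeaves k lam + numTrunks k lam := by
    rw [← wsum_eq, ← Fin.sum_univ_eq_sum_range]
    refine Finset.sum_congr rfl (fun i _ => ?_)
    rw [hwe (i : ℕ) i.isLt, Fin.eta]
  rw [← hsum1, ← hsum2]
  exact hcore

end CatAux


theorem stmt15 (k : ℕ) (hk : 1 ≤ k) (lam : Fin (k+1) → ℕ)
    (h0 : 0 < lam 0) (hl : 0 < lam (Fin.last k))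
    (htr : noAdjTrunks k lam)
    (hstem : ∀ i, lam i ≠ 0 → 3 ≤ lam i) :
    betaB (caterpillar k lam) = numLeaves k lam + numTrunks k lam := by
  have htr' : ∀ i j : Fin (k+1), (i : ℕ) + 1 = (j : ℕ) → ¬(lam i = 0 ∧ lam j = 0) := htr
  have hmem : (numLeaves k lam + numTrunks k lam) ∈
      {c | ∃ f, IsIndepBroadcast (caterpillar k lam) f ∧ cost f = c} :=
    ⟨CatAux.fzero k lam, CatAux.fzero_indep hk htr', CatAux.cost_fzero⟩
  have hub : ∀ c ∈ {c | ∃ f, IsIndepBroadcast (caterpillar k lam) f ∧ cost f = c},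
      c ≤ numLeaves k lam + numTrunks k lam := by
    rintro c ⟨f, hf, rfl⟩
    exact CatAux.upper hstem htr' f hf
  unfold betaB
  apply le_antisymm
  · exact csSup_le ⟨_, hmem⟩ hub
  · exact le_csSup ⟨_, fun c hc => hub c hc⟩ hmem
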